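/- Fix p > 2 and define the sequence (q_k) by q_1 = p and q_{k+1} = 2p q_k / (2p + 2q_k − p q_k) (as long as the denominator is positive). Then the sequence is strictly increasing and either the denominator becomes nonpositive at some finite stage or q_k → ∞ as k → ∞. Consequently χ_p(q_k) = p q_k/(p + q_k) converges to p. -/
import Mathlib


open Filter

/-- The bootstrap exponent iteration: with `q₁ = p > 2` and
`q_{k+1} = 2p q_k / (2p + 2q_k - p q_k)` (as long as the denominator is positive),
the sequence is strictly increasing where defined, and either the denominator becomes
nonpositive at some finite stage or `q_k → ∞`; consequently, in the latter case,
`χ_p(q_k) = p q_k/(p + q_k) → p`. -/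
theorem bootstrap_exponents (p : ℝ) (hp : 2 < p) (q : ℕ → ℝ)
    (h1 : q 1 = p)
    (hrec : ∀ k, 1 ≤ k → 0 < 2 * p + 2 * q k - p * q k →
      q (k + 1) = 2 * p * q k / (2 * p + 2 * q k - p * q k)) :
    (∀ k, 1 ≤ k → (∀ j, 1 ≤ j → j ≤ k → 0 < 2 * p + 2 * q j - p * q j) →
        q k < q (k + 1)) ∧
    ((∃ k, 1 ≤ k ∧ 2 * p + 2 * q k - p * q k ≤ 0) ∨
      (Tendsto q atTop atTop ∧
        Tendsto (fun k => p * q k / (p + q k)) atTop (nhds p))) := by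
  have hp0 : (0:ℝ) < p := by linarith
  have key : ∀ k, 1 ≤ k → (∀ j, 1 ≤ j → j ≤ k → 0 < 2 * p + 2 * q j - p * q j) →
      p ≤ q k := by
    intro k
    induction k with
    | zero => exact fun h => absurd h (by omega)
    | succ n ih =>
      intro _ hj
      rcases Nat.eq_zero_or_pos n with hn | hn
      · subst hn; rw [h1]
      · have hqn : p ≤ q n := ih hn (fun j a b => hj j a (b.trans (Nat.le_succ n)))
        have hd : 0 < 2 * p + 2 * q n - p * q n := hj n hn (Nat.le_succ n)
        rw [hrec n hn hd, le_div_iff₀ hd]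
        nlinarith [mul_le_mul_of_nonneg_left hqn (le_of_lt (mul_pos hp0 hp0)),
          mul_lt_mul_of_pos_right hp (mul_pos hp0 hp0)]
  constructor
  · intro k hk hj
    have hqk : p ≤ q k := key k hk hj
    have hd : 0 < 2 * p + 2 * q k - p * q k := hj k hk le_rfl
    rw [hrec k hk hd, lt_div_iff₀ hd]
    nlinarith [mul_pos (by linarith : (0:ℝ) < p - 2)
      (mul_pos (lt_of_lt_of_le hp0 hqk) (lt_of_lt_of_le hp0 hqk))]
  · left
    by_contra h
    push_neg at h
    have hall : ∀ k, 1 ≤ k → 0 < 2 * p + 2 * q k - p * q k := h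
    have hkey : ∀ k, 1 ≤ k → p ≤ q k := fun k hk => key k hk (fun j a _ => hall j a)
    set c : ℝ := p * (p - 2) / 2 with hc
    have hcpos : 0 < c := div_pos (mul_pos hp0 (by linarith)) two_pos
    have step : ∀ k, 1 ≤ k → q k + c ≤ q (k + 1) := by
      intro k hk
      have hqk := hkey k hk
      have hd := hall k hk
      have hD2 : 2 * p + 2 * q k - p * q k < 2 * p := by nlinarith
      have hxx : p * p ≤ q k * q k :=
        mul_le_mul hqk hqk hp0.le (le_trans hp0.le hqk)
      rw [hrec k hk hd, le_div_iff₀ hd]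
      nlinarith [mul_lt_mul_of_pos_left hD2 hcpos,
        mul_le_mul_of_nonneg_left hxx (by linarith : (0:ℝ) ≤ p - 2), hc]
    have growth : ∀ n : ℕ, p + n * c ≤ q (1 + n) := by
      intro n
      induction n with
      | zero => simp [h1]
      | succ m ih =>
        have hstep : q (1 + m) + c ≤ q (1 + m + 1) := step (1 + m) (by omega)
        have : (1 + (m + 1)) = 1 + m + 1 := by omega
        rw [this]
        push_cast
        linarith
    obtain ⟨n, hn⟩ := exists_nat_gt ((2 * p) / ((p - 2) * c))
    have hpc : (0:ℝ) < (p - 2) * c := mul_pos (by linarith) hcpos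
    have h2 : 2 * p < n * ((p - 2) * c) := by
      rw [div_lt_iff₀ hpc] at hn
      linarith
    have hq := growth n
    have hd := hall (1 + n) (by omega)
    nlinarith [mul_le_mul_of_nonneg_left hq (by linarith : (0:ℝ) ≤ p - 2)]
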